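/- If Z : ℝᵐ → ℝ is the value function of the phase-one LP above (Z(s) = min{1ᵀ(l⁺+l⁻) : Ax + l⁺ − l⁻ = Ds + d, l⁺, l⁻ ≥ 0}), then Z is nonnegative, convex, and Lipschitz continuous with Lipschitz constant ‖D‖ (operator norm with ℓ∞-bounded duals: |Z(s) − Z(s')| ≤ Σᵢ |(D(s−s'))ᵢ| = ‖D(s−s')‖₁). -/
import Mathlib


open Matrix

/-- the phase-one LP value function
`Z s = min {1ᵀ(l⁺+l⁻) : Ax + l⁺ − l⁻ = D s + d, l⁺,l⁻ ≥ 0}` is nonnegative,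
convex, and Lipschitz in the sense `|Z s − Z s'| ≤ ‖D(s−s')‖₁`. -/
theorem phase_one_value_convex_lipschitz (p n m : ℕ)
    (A : Matrix (Fin p) (Fin n) ℝ) (D : Matrix (Fin p) (Fin m) ℝ)
    (d : Fin p → ℝ) (Z : (Fin m → ℝ) → ℝ)
    (hZ : ∀ s, IsGLB {v | ∃ (x : Fin n → ℝ) (lp lm : Fin p → ℝ),
      (∀ i, 0 ≤ lp i) ∧ (∀ i, 0 ≤ lm i) ∧
      (∀ i, A.mulVec x i + lp i - lm i = D.mulVec s i + d i) ∧
      v = ∑ i, (lp i + lm i)} (Z s)) :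
    (∀ s, 0 ≤ Z s) ∧ ConvexOn ℝ Set.univ Z ∧
      ∀ s s', |Z s - Z s'| ≤ ∑ i, |D.mulVec (s - s') i| := by
  set P : (Fin m → ℝ) → ℝ → Prop := fun s v =>
    ∃ (x : Fin n → ℝ) (lp lm : Fin p → ℝ),
      (∀ i, 0 ≤ lp i) ∧ (∀ i, 0 ≤ lm i) ∧
      (∀ i, A.mulVec x i + lp i - lm i = D.mulVec s i + d i) ∧
      v = ∑ i, (lp i + lm i) with hP
  -- shifting a feasible point from rhs s' to rhs s costs ∑ |D(s-s')|
  have hshift : ∀ s s' v, P s' v → P s (v + ∑ i, |D.mulVec (s - s') i|) := by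
    rintro s s' v ⟨x, lp, lm, hlp, hlm, heq, hv⟩
    set e : Fin p → ℝ := fun i => D.mulVec (s - s') i with he
    have hesub : ∀ i, e i = D.mulVec s i - D.mulVec s' i := by
      intro i; rw [he]; simp [Matrix.mulVec_sub]
    refine ⟨x, fun i => lp i + max (e i) 0, fun i => lm i + max (-(e i)) 0,
      fun i => add_nonneg (hlp i) (le_max_right _ _),
      fun i => add_nonneg (hlm i) (le_max_right _ _), ?_, ?_⟩
    · intro i
      have h1 := heq i
      have h2 := hesub i
      have hmax : max (e i) 0 - max (-(e i)) 0 = e i := by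
        rcases le_total 0 (e i) with h | h
        · rw [max_eq_left h, max_eq_right (by linarith)]; ring
        · rw [max_eq_right h, max_eq_left (by linarith)]; ring
      show A.mulVec x i + (lp i + max (e i) 0) - (lm i + max (-(e i)) 0)
          = D.mulVec s i + d i
      linarith
    · have habs : ∀ i, max (e i) 0 + max (-(e i)) 0 = |e i| := by
        intro i
        rcases le_total 0 (e i) with h | h
        · rw [max_eq_left h, max_eq_right (by linarith), abs_of_nonneg h]; ring
        · rw [max_eq_right h, max_eq_left (by linarith), abs_of_nonpos h]; ring
      have : ∑ i, ((lp i + max (e i) 0) + (lm i + max (-(e i)) 0))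
          = ∑ i, (lp i + lm i) + ∑ i, |e i| := by
        rw [← Finset.sum_add_distrib]
        apply Finset.sum_congr rfl
        intro i _
        have := habs i; linarith
      rw [this, ← hv]
  refine ⟨?_, ?_, ?_⟩
  · -- nonnegativity
    intro s
    refine (hZ s).2 ?_
    rintro v ⟨x, lp, lm, hlp, hlm, heq, hv⟩
    rw [hv]
    exact Finset.sum_nonneg fun i _ => add_nonneg (hlp i) (hlm i)
  · -- convexity
    refine ⟨convex_univ, ?_⟩
    intro s₁ _ s₂ _ a b ha hb hab
    refine le_of_forall_pos_le_add ?_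
    intro ε hε
    obtain ⟨v₁, hv₁, _, hv₁'⟩ := (hZ s₁).exists_between (lt_add_of_pos_right _ hε)
    obtain ⟨v₂, hv₂, _, hv₂'⟩ := (hZ s₂).exists_between (lt_add_of_pos_right _ hε)
    obtain ⟨x₁, lp₁, lm₁, hlp₁, hlm₁, heq₁, hval₁⟩ := hv₁
    obtain ⟨x₂, lp₂, lm₂, hlp₂, hlm₂, heq₂, hval₂⟩ := hv₂
    have hmem : P (a • s₁ + b • s₂) (a * v₁ + b * v₂) := by
      refine ⟨a • x₁ + b • x₂, fun i => a * lp₁ i + b * lp₂ i,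
        fun i => a * lm₁ i + b * lm₂ i,
        fun i => add_nonneg (mul_nonneg ha (hlp₁ i)) (mul_nonneg hb (hlp₂ i)),
        fun i => add_nonneg (mul_nonneg ha (hlm₁ i)) (mul_nonneg hb (hlm₂ i)), ?_, ?_⟩
      · intro i
        have h1 := heq₁ i
        have h2 := heq₂ i
        have hA : A.mulVec (a • x₁ + b • x₂) i
            = a * A.mulVec x₁ i + b * A.mulVec x₂ i := by
          simp [Matrix.mulVec_add, Matrix.mulVec_smul]
        have hD : D.mulVec (a • s₁ + b • s₂) i
            = a * D.mulVec s₁ i + b * D.mulVec s₂ i := by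
          simp [Matrix.mulVec_add, Matrix.mulVec_smul]
        have hab' : a + b = 1 := hab
        dsimp only
        rw [hA, hD]
        linear_combination a * h1 + b * h2 + d i * hab'
      · rw [hval₁, hval₂, Finset.mul_sum, Finset.mul_sum, ← Finset.sum_add_distrib]
        apply Finset.sum_congr rfl
        intro i _
        ring
    have hle : Z (a • s₁ + b • s₂) ≤ a * v₁ + b * v₂ := (hZ _).1 hmem
    calc Z (a • s₁ + b • s₂) ≤ a * v₁ + b * v₂ := hle
      _ ≤ a * (Z s₁ + ε) + b * (Z s₂ + ε) := by
          exact add_le_add (mul_le_mul_of_nonneg_left hv₁'.le ha)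
            (mul_le_mul_of_nonneg_left hv₂'.le hb)
      _ = a • Z s₁ + b • Z s₂ + ε := by
          simp only [smul_eq_mul]; nlinarith [hab]
  · -- Lipschitz
    intro s s'
    have key : ∀ t t' : Fin m → ℝ, Z t - Z t' ≤ ∑ i, |D.mulVec (t - t') i| := by
      intro t t'
      have hlb : Z t - ∑ i, |D.mulVec (t - t') i| ≤ Z t' := by
        refine (hZ t').2 ?_
        intro v hv
        have := (hZ t).1 (hshift t t' v hv)
        linarith
      linarith
    have h1 := key s s'
    have h2 := key s' s
    have hsym : ∑ i, |D.mulVec (s' - s) i| = ∑ i, |D.mulVec (s - s') i| := by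
      apply Finset.sum_congr rfl
      intro i _
      have h3 : (s' - s) = -(s - s') := (neg_sub _ _).symm
      rw [h3, Matrix.mulVec_neg, Pi.neg_apply, abs_neg]
    rw [hsym] at h2
    rw [abs_sub_le_iff]
    exact ⟨h1, h2⟩
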